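/- Let G be the subgroup of the group of bijections of ℚ generated by a : x ↦ x + 1, b : x ↦ −x, and c : x ↦ 5x. For m ≥ 0 set G_m = ⟨a^{2^m}, b, c⟩. Then for all integers n ≥ m + 2, the normal core of G_n in G_m (the largest subgroup of G_n normal in G_m) equals ⟨a^{2^n}, c^{2^{n−m−2}}⟩, and the quotient of G_n by this core is isomorphic to the unit group (ℤ/2^{n−m}ℤ)ˣ. -/

import Mathlib

/-- The translation `x ↦ x + 1` of `ℚ`. -/
def aQ : Equiv.Perm ℚ := Equiv.addRight 1

/-- The negation `x ↦ -x` of `ℚ`. -/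
def bQ : Equiv.Perm ℚ := Equiv.neg ℚ

/-- The multiplication `x ↦ 5 * x` of `ℚ`. -/
def cQ : Equiv.Perm ℚ := Equiv.mulLeft₀ 5 (by norm_num)

namespace Stmt15

/-- `2^r ℤ[1/5]` as a set condition. -/
def TT (r : ℕ) : AddSubgroup ℚ where
  carrier := {q | ∃ (z : ℤ) (j : ℕ), q * 5 ^ j = 2 ^ r * z}
  zero_mem' := ⟨0, 0, by simp⟩
  add_mem' := by
    rintro q q' ⟨z, j, hz⟩ ⟨z', j', hz'⟩
    refine ⟨z * 5 ^ j' + z' * 5 ^ j, j + j', ?_⟩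
    push_cast
    linear_combination (5:ℚ) ^ j' * hz + (5:ℚ) ^ j * hz' 
  neg_mem' := by
    rintro q ⟨z, j, hz⟩
    exact ⟨-z, j, by push_cast; rw [neg_mul, hz]; ring⟩

lemma TT_mono {r s : ℕ} (h : r ≤ s) : TT s ≤ TT r := by
  rintro q ⟨z, j, hz⟩
  obtain ⟨u, rfl⟩ : ∃ u, s = r + u := ⟨s - r, by omega⟩
  refine ⟨2 ^ u * z, j, ?_⟩
  push_cast
  rw [hz, pow_add]
  ring

lemma TT_mul_unit {r : ℕ} {q : ℚ} (hq : q ∈ TT r) (ε : ℤˣ) (k : ℤ) :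
    (ε : ℚ) * 5 ^ k * q ∈ TT r := by
  obtain ⟨z, j, hz⟩ := hq
  rcases le_or_gt 0 k with hk | hk
  · lift k to ℕ using hk
    refine ⟨ε * 5 ^ k * z, j, ?_⟩
    rw [zpow_natCast]
    push_cast
    calc (ε:ℚ) * 5 ^ k * q * 5 ^ j = (ε:ℚ) * 5 ^ k * (q * 5 ^ j) := by ring
      _ = (ε:ℚ) * 5 ^ k * (2 ^ r * z) := by rw [hz]
      _ = 2 ^ r * ((ε:ℚ) * 5 ^ k * z) := by ring
  · obtain ⟨K, rfl⟩ : ∃ K : ℕ, k = -(K : ℤ) := ⟨k.natAbs, by omega⟩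
    refine ⟨ε * z, j + K, ?_⟩
    push_cast
    rw [zpow_neg, zpow_natCast, pow_add]
    have h5 : (5:ℚ) ^ K ≠ 0 := by positivity
    calc (ε:ℚ) * (5 ^ K)⁻¹ * q * (5 ^ j * 5 ^ K)
        = (ε:ℚ) * (q * 5 ^ j) * ((5 ^ K)⁻¹ * 5 ^ K) := by ring
      _ = (ε:ℚ) * (2 ^ r * z) * 1 := by rw [hz, inv_mul_cancel₀ h5]
      _ = 2 ^ r * ((ε:ℚ) * z) := by ring

/-- affine predicate -/
def isAff (u t : ℚ) (e : Equiv.Perm ℚ) : Prop := ∀ x, e x = u * x + t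

lemma isAff.unique_u {u t u' t' : ℚ} {e : Equiv.Perm ℚ} (h : isAff u t e) (h' : isAff u' t' e) :
    u = u' := by
  have h0 := (h 0).symm.trans (h' 0)
  have h1 := (h 1).symm.trans (h' 1)
  simp at h0 h1; linarith

lemma isAff.unique_t {u t u' t' : ℚ} {e : Equiv.Perm ℚ} (h : isAff u t e) (h' : isAff u' t' e) :
    t = t' := by
  have h0 := (h 0).symm.trans (h' 0)
  simpa using h0

lemma isAff.mul {u t u' t' : ℚ} {e f : Equiv.Perm ℚ} (h : isAff u t e) (h' : isAff u' t' f) :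
    isAff (u * u') (u * t' + t) (e * f) := fun x => by
  rw [Equiv.Perm.mul_apply, h, h']; ring

lemma isAff.inv {u t : ℚ} {e : Equiv.Perm ℚ} (hu : u ≠ 0) (h : isAff u t e) :
    isAff u⁻¹ (-(u⁻¹ * t)) e⁻¹ := fun x => by
  have : e (u⁻¹ * x + -(u⁻¹ * t)) = x := by rw [h]; field_simp; ring
  calc e⁻¹ x = e⁻¹ (e (u⁻¹ * x + -(u⁻¹ * t))) := by rw [this]
    _ = u⁻¹ * x + -(u⁻¹ * t) := e.symm_apply_apply _


@[simp] lemma aQ_apply (x : ℚ) : aQ x = x + 1 := rfl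
@[simp] lemma bQ_apply (x : ℚ) : bQ x = -x := rfl
@[simp] lemma cQ_apply (x : ℚ) : cQ x = 5 * x := rfl

lemma aQ_pow_apply (p : ℕ) (x : ℚ) : (aQ ^ p) x = x + p := by
  induction p with
  | zero => simp
  | succ p ih => rw [pow_succ', Equiv.Perm.mul_apply, ih, aQ_apply]; push_cast; ring

lemma aQ_zpow_apply (p : ℤ) (x : ℚ) : (aQ ^ p) x = x + p := by
  rcases le_or_gt 0 p with hp | hp
  · lift p to ℕ using hp; rw [zpow_natCast, aQ_pow_apply]; norm_num
  · obtain ⟨P, rfl⟩ : ∃ P : ℕ, p = -(P : ℤ) := ⟨p.natAbs, by omega⟩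
    rw [zpow_neg, zpow_natCast]
    have := aQ_pow_apply P ((aQ ^ P)⁻¹ x)
    have h2 : (aQ ^ P) ((aQ ^ P)⁻¹ x) = x := Equiv.apply_symm_apply _ _
    rw [h2] at this
    push_cast
    linarith

lemma cQ_pow_apply (p : ℕ) (x : ℚ) : (cQ ^ p) x = 5 ^ p * x := by
  induction p with
  | zero => simp
  | succ p ih => rw [pow_succ', Equiv.Perm.mul_apply, ih, cQ_apply, pow_succ]; ring

lemma cQ_zpow_apply (p : ℤ) (x : ℚ) : (cQ ^ p) x = 5 ^ p * x := by
  rcases le_or_gt 0 p with hp | hp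
  · lift p to ℕ using hp; rw [zpow_natCast, cQ_pow_apply, zpow_natCast]
  · obtain ⟨P, rfl⟩ : ∃ P : ℕ, p = -(P : ℤ) := ⟨p.natAbs, by omega⟩
    rw [zpow_neg, zpow_natCast]
    have h2 : (cQ ^ P) ((cQ ^ P)⁻¹ x) = x := Equiv.apply_symm_apply _ _
    have h5 : (5:ℚ) ^ P ≠ 0 := by positivity
    set y := (cQ ^ P)⁻¹ x with hy
    have hx : x = 5 ^ P * y := by rw [← h2, cQ_pow_apply]
    rw [hx, zpow_neg, zpow_natCast, inv_mul_cancel_left₀ h5]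

/-- The subgroup `G_r` described explicitly. -/
def SS (r : ℕ) : Subgroup (Equiv.Perm ℚ) where
  carrier := {e | ∃ (ε : ℤˣ) (k : ℤ) (t : ℚ), t ∈ TT r ∧ isAff ((ε : ℚ) * 5 ^ k) t e}
  one_mem' := ⟨1, 0, 0, (TT r).zero_mem, fun x => by simp⟩
  mul_mem' := by
    rintro e f ⟨ε, k, t, ht, he⟩ ⟨ε', k', t', ht', hf⟩
    refine ⟨ε * ε', k + k', (ε:ℚ) * 5 ^ k * t' + t, (TT r).add_mem (TT_mul_unit ht' ε k) ht, ?_⟩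
    have key : ((ε:ℚ) * 5 ^ k) * ((ε':ℚ) * 5 ^ k') = ((ε * ε' : ℤˣ) : ℚ) * 5 ^ (k + k') := by
      push_cast
      rw [zpow_add₀ (by norm_num : (5:ℚ) ≠ 0)]
      ring
    exact key ▸ he.mul hf
  inv_mem' := by
    rintro e ⟨ε, k, t, ht, he⟩
    have hu : ((ε:ℚ) * 5 ^ k) ≠ 0 := by
      have : (5:ℚ) ^ k ≠ 0 := zpow_ne_zero _ (by norm_num)
      rcases Int.units_eq_one_or ε with rfl | rfl <;> simpa
    have key : ((ε:ℚ) * 5 ^ k)⁻¹ = (ε : ℚ) * 5 ^ (-k) := by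
      rcases Int.units_eq_one_or ε with rfl | rfl <;> push_cast <;>
        rw [mul_inv, zpow_neg] <;> norm_num
    refine ⟨ε, -k, -(((ε:ℚ) * 5 ^ k)⁻¹ * t), ?_, by rw [← key]; exact he.inv hu⟩
    have hmem := TT_mul_unit ((TT r).neg_mem ht) ε (-k)
    have heq : -(((ε:ℚ) * 5 ^ k)⁻¹ * t) = (ε:ℚ) * 5 ^ (-k : ℤ) * (-t) := by rw [key]; ring
    rw [heq]; exact hmem


lemma isAff.ext {u t : ℚ} {e f : Equiv.Perm ℚ} (he : isAff u t e) (hf : isAff u t f) :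
    e = f := Equiv.ext fun x => by rw [he, hf]

lemma haff_apow (p : ℕ) : isAff 1 (p : ℚ) (aQ ^ p) := fun x => by
  rw [aQ_pow_apply]; ring

lemma haff_apow_zpow (p : ℕ) (z : ℤ) : isAff 1 ((p : ℚ) * z) ((aQ ^ p) ^ z) := fun x => by
  rw [← zpow_natCast aQ p, ← zpow_mul, aQ_zpow_apply]
  push_cast; ring

lemma haff_b : isAff (-1) 0 bQ := fun x => by simp

lemma haff_czpow (p : ℤ) : isAff ((5:ℚ) ^ p) 0 (cQ ^ p) := fun x => by
  rw [cQ_zpow_apply]; ring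

lemma isAff.congr {u t u' t' : ℚ} {e : Equiv.Perm ℚ} (h : isAff u t e) (hu : u = u')
    (ht : t = t') : isAff u' t' e := hu ▸ ht ▸ h

lemma haff_cpow (j : ℕ) : isAff ((5:ℚ) ^ (j : ℤ)) 0 (cQ ^ j) := fun x => by
  rw [cQ_pow_apply, zpow_natCast]; ring

lemma haff_cpow_inv (j : ℕ) : isAff ((5:ℚ) ^ (-(j : ℤ))) 0 ((cQ ^ j)⁻¹) := by
  have heq : cQ ^ (-(j : ℤ)) = (cQ ^ j)⁻¹ := by rw [zpow_neg, zpow_natCast]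
  exact heq ▸ haff_czpow (-(j : ℤ))

lemma haff_cpow_zpow (d : ℕ) (k : ℤ) : isAff ((5:ℚ) ^ ((d : ℤ) * k)) 0 ((cQ ^ d) ^ k) := by
  have heq : cQ ^ ((d : ℤ) * k) = (cQ ^ d) ^ k := by rw [zpow_mul, zpow_natCast]
  exact heq ▸ haff_czpow ((d : ℤ) * k)

lemma five_zpow_ne (p : ℤ) : (5:ℚ) ^ p ≠ 0 := zpow_ne_zero _ (by norm_num)

lemma closure_eq (r : ℕ) : Subgroup.closure {aQ ^ 2 ^ r, bQ, cQ} = SS r := by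
  apply le_antisymm
  · rw [Subgroup.closure_le]
    rintro e hx
    simp only [Set.mem_insert_iff, Set.mem_singleton_iff] at hx
    rcases hx with rfl | rfl | rfl
    · exact ⟨1, 0, ((2:ℚ) ^ r), ⟨1, 0, by push_cast; ring⟩,
        fun x => by rw [aQ_pow_apply]; push_cast; ring⟩
    · exact ⟨-1, 0, 0, (TT r).zero_mem, fun x => by push_cast; simp⟩
    · exact ⟨1, 1, 0, (TT r).zero_mem, fun x => by push_cast; simp⟩
  · rintro e ⟨ε, k, t, ⟨z, j, hzj⟩, he⟩
    have hamem : aQ ^ 2 ^ r ∈ Subgroup.closure {aQ ^ 2 ^ r, bQ, cQ} :=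
      Subgroup.subset_closure (by simp)
    have hbmem : bQ ∈ Subgroup.closure {aQ ^ 2 ^ r, bQ, cQ} :=
      Subgroup.subset_closure (by simp)
    have hcmem : cQ ∈ Subgroup.closure {aQ ^ 2 ^ r, bQ, cQ} :=
      Subgroup.subset_closure (by simp)
    obtain ⟨β, hβmem, hβ⟩ : ∃ β ∈ Subgroup.closure {aQ ^ 2 ^ r, bQ, cQ},
        isAff (ε : ℚ) 0 β := by
      rcases Int.units_eq_one_or ε with rfl | rfl
      · exact ⟨1, Subgroup.one_mem _, fun x => by push_cast; simp⟩
      · exact ⟨bQ, hbmem, by push_cast; exact haff_b⟩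
    set g : Equiv.Perm ℚ :=
      (cQ ^ j)⁻¹ * ((aQ ^ 2 ^ r) ^ z * (cQ ^ j * (β * cQ ^ k))) with hg
    have hgmem : g ∈ Subgroup.closure {aQ ^ 2 ^ r, bQ, cQ} := by
      exact Subgroup.mul_mem _ (Subgroup.inv_mem _ (Subgroup.pow_mem _ hcmem j))
        (Subgroup.mul_mem _ (Subgroup.zpow_mem _ hamem z)
          (Subgroup.mul_mem _ (Subgroup.pow_mem _ hcmem j)
            (Subgroup.mul_mem _ hβmem (Subgroup.zpow_mem _ hcmem k))))
    have hgaff := (haff_cpow_inv j).mul ((haff_apow_zpow (2 ^ r) z).mul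
      ((haff_cpow j).mul (hβ.mul (haff_czpow k))))
    have h5j : ((5:ℚ) ^ j) ≠ 0 := by positivity
    have hneg : (5:ℚ) ^ (-(j:ℤ)) = ((5:ℚ) ^ j)⁻¹ := by rw [zpow_neg, zpow_natCast]
    have hgaff' : isAff ((ε:ℚ) * 5 ^ k) t g := by
      refine hgaff.congr ?_ ?_
      · rw [hneg, zpow_natCast]
        field_simp
      · have ht : t = ((2:ℚ) ^ r * z) * ((5:ℚ) ^ j)⁻¹ := by
          field_simp
          linear_combination hzj
        rw [hneg, ht]
        push_cast
        ring
    rw [he.ext hgaff']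
    exact hgmem

/-- The normal core, described explicitly. -/
def CC (N d : ℕ) : Subgroup (Equiv.Perm ℚ) where
  carrier := {e | ∃ (k : ℤ) (t : ℚ), t ∈ TT N ∧ isAff ((5:ℚ) ^ ((d : ℤ) * k)) t e}
  one_mem' := ⟨0, 0, (TT N).zero_mem, fun x => by simp⟩
  mul_mem' := by
    rintro e f ⟨k, t, ht, he⟩ ⟨k', t', ht', hf⟩
    refine ⟨k + k', (5:ℚ) ^ ((d:ℤ) * k) * t' + t,
      (TT N).add_mem (by simpa using TT_mul_unit ht' 1 ((d:ℤ) * k)) ht, ?_⟩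
    have key : (5:ℚ) ^ ((d:ℤ) * k) * (5:ℚ) ^ ((d:ℤ) * k') = (5:ℚ) ^ ((d:ℤ) * (k + k')) := by
      rw [← zpow_add₀ (by norm_num : (5:ℚ) ≠ 0)]; ring_nf
    exact key ▸ he.mul hf
  inv_mem' := by
    rintro e ⟨k, t, ht, he⟩
    have key : ((5:ℚ) ^ ((d:ℤ) * k))⁻¹ = (5:ℚ) ^ ((d:ℤ) * (-k)) := by
      rw [← zpow_neg]; ring_nf
    refine ⟨-k, -(((5:ℚ) ^ ((d:ℤ) * k))⁻¹ * t), ?_, by rw [← key]; exact he.inv (five_zpow_ne _)⟩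
    have hmem := TT_mul_unit ((TT N).neg_mem ht) 1 ((d:ℤ) * (-k))
    have heq : -(((5:ℚ) ^ ((d:ℤ) * k))⁻¹ * t) = ((1:ℤˣ):ℚ) * (5:ℚ) ^ ((d:ℤ) * (-k)) * (-t) := by
      rw [key]; push_cast; ring
    rw [heq]; exact hmem

lemma closure_core_eq (N d : ℕ) (hd : 1 ≤ d) :
    Subgroup.closure {aQ ^ 2 ^ N, cQ ^ d} = CC N d := by
  apply le_antisymm
  · rw [Subgroup.closure_le]
    rintro e hx
    simp only [Set.mem_insert_iff, Set.mem_singleton_iff] at hx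
    rcases hx with rfl | rfl
    · refine ⟨0, (2:ℚ) ^ N, ⟨1, 0, by push_cast; ring⟩, ?_⟩
      have : ((d:ℤ) * 0) = 0 := by ring
      rw [this, zpow_zero]
      exact fun x => by rw [aQ_pow_apply]; push_cast; ring
    · have := haff_cpow_zpow d 1
      rw [zpow_one] at this
      exact ⟨1, 0, (TT N).zero_mem, this⟩
  · rintro e ⟨k, t, ⟨z, j, hzj⟩, he⟩
    have hamem : aQ ^ 2 ^ N ∈ Subgroup.closure {aQ ^ 2 ^ N, cQ ^ d} :=
      Subgroup.subset_closure (by simp)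
    have hcmem : cQ ^ d ∈ Subgroup.closure {aQ ^ 2 ^ N, cQ ^ d} :=
      Subgroup.subset_closure (by simp)
    set z' : ℤ := z * 5 ^ ((d - 1) * j) with hz'
    set g : Equiv.Perm ℚ :=
      ((cQ ^ d) ^ j)⁻¹ * ((aQ ^ 2 ^ N) ^ z' * ((cQ ^ d) ^ j * (cQ ^ d) ^ k)) with hg
    have hgmem : g ∈ Subgroup.closure {aQ ^ 2 ^ N, cQ ^ d} :=
      Subgroup.mul_mem _ (Subgroup.inv_mem _ (Subgroup.pow_mem _ hcmem j))
        (Subgroup.mul_mem _ (Subgroup.zpow_mem _ hamem z')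
          (Subgroup.mul_mem _ (Subgroup.pow_mem _ hcmem j) (Subgroup.zpow_mem _ hcmem k)))
    have hcdj : isAff ((5:ℚ) ^ ((d:ℤ) * (j:ℤ))) 0 ((cQ ^ d) ^ j) := by
      have := haff_cpow_zpow d (j : ℤ); rwa [zpow_natCast] at this
    have hcdjinv : isAff ((5:ℚ) ^ (-((d:ℤ) * (j:ℤ)))) 0 (((cQ ^ d) ^ j)⁻¹) := by
      have h2 : cQ ^ (-((d:ℤ) * (j:ℤ))) = ((cQ ^ d) ^ j)⁻¹ := by
        rw [zpow_neg, zpow_mul, zpow_natCast, zpow_natCast]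
      exact h2 ▸ haff_czpow (-((d:ℤ) * (j:ℤ)))
    have hgaff := hcdjinv.mul ((haff_apow_zpow (2 ^ N) z').mul
      (hcdj.mul (haff_cpow_zpow d k)))
    have h5dj : ((5:ℚ) ^ ((d:ℤ) * (j:ℤ))) ≠ 0 := five_zpow_ne _
    have h5j : ((5:ℚ) ^ j) ≠ 0 := by positivity
    have e2 : (5:ℚ) ^ (-((d:ℤ) * (j:ℤ))) * 5 ^ (((d - 1) * j : ℕ) : ℤ) = ((5:ℚ) ^ j)⁻¹ := by
      rw [← zpow_add₀ (by norm_num : (5:ℚ) ≠ 0)]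
      have hexp : (-((d:ℤ) * (j:ℤ)) + (((d - 1) * j : ℕ) : ℤ)) = -(j:ℤ) := by
        push_cast [Nat.cast_sub hd]
        try ring
      rw [hexp, zpow_neg, zpow_natCast]
    have hgaff' : isAff ((5:ℚ) ^ ((d:ℤ) * k)) t g := by
      refine hgaff.congr ?_ ?_
      · rw [zpow_neg]
        field_simp
        try ring
      · have e1 : ((z' : ℚ)) = (z : ℚ) * 5 ^ (((d - 1) * j : ℕ) : ℤ) := by
          rw [hz', zpow_natCast]
          push_cast
          try ring
        push_cast
        rw [e1]
        calc (5:ℚ) ^ (-((d:ℤ) * (j:ℤ))) * (1 * ((5:ℚ) ^ ((d:ℤ) * (j:ℤ)) * 0 + 0)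
              + ((2:ℚ) ^ N * ((z:ℚ) * 5 ^ (((d - 1) * j : ℕ) : ℤ)))) + 0
            = (2:ℚ) ^ N * z * ((5:ℚ) ^ (-((d:ℤ) * (j:ℤ))) * 5 ^ (((d - 1) * j : ℕ) : ℤ)) := by
              ring
          _ = (2:ℚ) ^ N * z * ((5:ℚ) ^ j)⁻¹ := by rw [e2]
          _ = t := by
              have ht : t = (2:ℚ) ^ N * z * ((5:ℚ) ^ j)⁻¹ := by
                field_simp
                linear_combination hzj
              rw [ht]
    rw [he.ext hgaff']
    exact hgmem


/-! ### Number theory -/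

lemma binom_aux (x : ℤ) (o : ℕ) : ∃ B : ℤ, (1 + x) ^ o = 1 + o * x + x ^ 2 * B := by
  induction o with
  | zero => exact ⟨0, by ring⟩
  | succ o ih =>
    obtain ⟨B, hB⟩ := ih
    exact ⟨B + o + x * B, by rw [pow_succ, hB]; push_cast; ring⟩

lemma five_pow_two_pow (s : ℕ) : ∃ o : ℤ, Odd o ∧ (5:ℤ) ^ 2 ^ s = 1 + 2 ^ (s + 2) * o := by
  induction s with
  | zero => exact ⟨1, ⟨0, by ring⟩, by norm_num⟩
  | succ s ih =>
    obtain ⟨o, ho, h⟩ := ih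
    refine ⟨o + 2 ^ (s + 1) * o ^ 2, ?_, ?_⟩
    · obtain ⟨c, hc⟩ := ho
      exact ⟨c + 2 ^ s * o ^ 2, by rw [pow_succ]; push_cast; linarith [hc]⟩
    · have : (5:ℤ) ^ 2 ^ (s + 1) = ((5:ℤ) ^ 2 ^ s) ^ 2 := by
        rw [← pow_mul, pow_succ]
      rw [this, h]
      ring

lemma two_pow_dvd_mul_odd {a b : ℕ} {o : ℤ} (ho : Odd o) : (2:ℤ) ^ a ∣ 2 ^ b * o ↔ a ≤ b := by
  constructor
  · intro h
    by_contra hab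
    push_neg at hab
    have h1 : (2:ℤ) ^ (b + 1) ∣ 2 ^ b * o := dvd_trans (pow_dvd_pow 2 (by omega)) h
    rw [pow_succ] at h1
    obtain ⟨c, hc⟩ := h1
    have h2b : (2:ℤ) ^ b ≠ 0 := by positivity
    have h2 : o = 2 * c := mul_left_cancel₀ h2b (by linarith)
    obtain ⟨c', hc'⟩ := ho
    omega
  · intro h
    exact Dvd.dvd.mul_right (pow_dvd_pow 2 h) o

lemma five_pow_sub_one_dvd_iff {e : ℕ} (he : 2 ≤ e) (K : ℕ) :
    (2:ℤ) ^ e ∣ 5 ^ K - 1 ↔ (2:ℤ) ^ (e - 2) ∣ (K:ℤ) := by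
  rcases eq_or_ne K 0 with rfl | hK
  · simp
  obtain ⟨v, w, hw, hKeq⟩ := Nat.exists_eq_pow_mul_and_not_dvd hK 2 (by norm_num)
  obtain ⟨o, ho, h5⟩ := five_pow_two_pow v
  obtain ⟨B, hB⟩ := binom_aux (2 ^ (v + 2) * o) w
  set o' : ℤ := (w:ℤ) * o + 2 ^ (v + 2) * (o ^ 2 * B) with ho'def
  have hodd : Odd o' := by
    obtain ⟨c, hc⟩ := Nat.odd_iff.mpr (Nat.two_dvd_ne_zero.mp hw)
    obtain ⟨c', hc'⟩ := ho
    refine ⟨(2 * c' + 1) * c + c' + 2 ^ (v + 1) * (o ^ 2 * B), ?_⟩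
    rw [ho'def, hc, hc']
    push_cast
    ring
  have hfive : (5:ℤ) ^ K - 1 = 2 ^ (v + 2) * o' := by
    rw [hKeq, pow_mul, h5, hB, ho'def]
    push_cast
    ring
  have hwodd : Odd (w:ℤ) := by
    obtain ⟨c, hc⟩ := Nat.odd_iff.mpr (Nat.two_dvd_ne_zero.mp hw)
    exact ⟨c, by omega⟩
  have hK' : (K:ℤ) = 2 ^ v * (w:ℤ) := by rw [hKeq]; push_cast; ring
  rw [hfive, hK', two_pow_dvd_mul_odd hodd, two_pow_dvd_mul_odd hwodd]
  omega

lemma not_four_dvd_five_pow_add_one (K : ℕ) : ¬ (4:ℤ) ∣ (1 + 5 ^ K) := by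
  intro h
  have h4 : (4:ℤ) ∣ 5 ^ K - 1 := by
    have := sub_dvd_pow_sub_pow (5:ℤ) 1 K
    simpa using this
  obtain ⟨c, hc⟩ := h
  obtain ⟨c', hc'⟩ := h4
  omega

lemma coprime_two_pow_five_pow (a b : ℕ) : IsCoprime ((2:ℤ) ^ a) ((5:ℤ) ^ b) :=
  IsCoprime.pow (by
    rw [Int.isCoprime_iff_gcd_eq_one]
    norm_num)

/-- (A'): if `2^(e-2) ∣ k` then `1 - 5^k ∈ 2^e ℤ[1/5]`. -/
lemma one_sub_five_zpow_mem {e : ℕ} (he : 2 ≤ e) {k : ℤ} (hk : (2:ℤ) ^ (e - 2) ∣ k) :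
    ∃ (w : ℤ) (J : ℕ), ((1:ℚ) - 5 ^ k) * 5 ^ J = 2 ^ e * w := by
  rcases le_or_gt 0 k with hk0 | hk0
  · lift k to ℕ using hk0 with K
    obtain ⟨w₀, hw₀⟩ := (five_pow_sub_one_dvd_iff he K).mpr (by exact_mod_cast hk)
    refine ⟨-w₀, 0, ?_⟩
    have hq : ((5 ^ K - 1 : ℤ) : ℚ) = ((2 ^ e * w₀ : ℤ) : ℚ) := by exact_mod_cast hw₀
    push_cast at hq
    rw [zpow_natCast]
    push_cast
    simp only [pow_zero, mul_one]
    linarith [hq]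
  · obtain ⟨K, rfl⟩ : ∃ K : ℕ, k = -(K : ℤ) := ⟨k.natAbs, by omega⟩
    have hkK : (2:ℤ) ^ (e - 2) ∣ (K:ℤ) := (dvd_neg).mp (by exact_mod_cast hk)
    obtain ⟨w₀, hw₀⟩ := (five_pow_sub_one_dvd_iff he K).mpr hkK
    refine ⟨w₀, K, ?_⟩
    have h5K : ((5:ℚ) ^ (-(K:ℤ))) * 5 ^ K = 1 := by
      rw [zpow_neg, zpow_natCast]
      field_simp
    have h5KQ : ((5:ℚ) ^ K) = 1 + ((1:ℚ) - 5 ^ (-(K:ℤ))) * 5 ^ K := by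
      rw [sub_mul, one_mul, h5K]
      ring
    have hcast : ((5:ℚ) ^ K) - 1 = ((5 ^ K - 1 : ℤ) : ℚ) := by push_cast; ring
    have : ((1:ℚ) - 5 ^ (-(K:ℤ))) * 5 ^ K = ((5 ^ K - 1 : ℤ) : ℚ) := by
      rw [← hcast]
      linarith [h5KQ]
    rw [this, hw₀]
    push_cast
    ring

/-- reduce a rational equation `(1 ± 5^k) 5^j = 2^e z` to an integer one. -/
lemma one_sub_five_zpow_int {e : ℕ} {k : ℤ} {j : ℕ} {z : ℤ}
    (h : ((1:ℚ) - 5 ^ k) * 5 ^ j = 2 ^ e * z) :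
    ∃ (K : ℕ) (j' : ℕ) (z' : ℤ), ((1:ℤ) - 5 ^ K) * 5 ^ j' = 2 ^ e * z' ∧ k.natAbs = K := by
  rcases le_or_gt 0 k with hk0 | hk0
  · lift k to ℕ using hk0 with K
    refine ⟨K, j, z, ?_, by simp⟩
    have hq : (((1 - 5 ^ K) * 5 ^ j : ℤ) : ℚ) = ((2 ^ e * z : ℤ) : ℚ) := by
      push_cast
      rw [← zpow_natCast (5:ℚ) K]
      linarith [h]
    exact_mod_cast hq
  · obtain ⟨K, rfl⟩ : ∃ K : ℕ, k = -(K : ℤ) := ⟨k.natAbs, by omega⟩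
    refine ⟨K, j, -(z * 5 ^ K), ?_, by simp⟩
    have h5K : ((5:ℚ) ^ (-(K:ℤ))) * 5 ^ K = 1 := by
      rw [zpow_neg, zpow_natCast]
      field_simp
    have hq2 : ((1:ℚ) - 5 ^ K) * 5 ^ j = 2 ^ e * (-(z * 5 ^ K)) := by
      have hmul : (((1:ℚ) - 5 ^ (-(K:ℤ))) * 5 ^ j) * 5 ^ K = (2 ^ e * z) * 5 ^ K := by
        rw [h]
      have hlhs : (((1:ℚ) - 5 ^ (-(K:ℤ))) * 5 ^ j) * 5 ^ K = (5 ^ K - 1) * 5 ^ j := by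
        have expand : ((1:ℚ) - 5 ^ (-(K:ℤ))) * 5 ^ K = 5 ^ K - 1 := by
          rw [sub_mul, one_mul, h5K]
        calc (((1:ℚ) - 5 ^ (-(K:ℤ))) * 5 ^ j) * 5 ^ K
            = (((1:ℚ) - 5 ^ (-(K:ℤ))) * 5 ^ K) * 5 ^ j := by ring
          _ = ((5:ℚ) ^ K - 1) * 5 ^ j := by rw [expand]
      have : ((5:ℚ) ^ K - 1) * 5 ^ j = 2 ^ e * z * 5 ^ K := by rw [← hlhs, hmul]
      linarith [this]
    have hq : (((1 - 5 ^ K) * 5 ^ j : ℤ) : ℚ) = ((2 ^ e * (-(z * 5 ^ K)) : ℤ) : ℚ) := by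
      push_cast
      push_cast at hq2
      linarith [hq2]
    exact_mod_cast hq

/-- (B') -/
lemma dvd_of_one_sub_five_zpow {e : ℕ} (he : 2 ≤ e) {k : ℤ} {j : ℕ} {z : ℤ}
    (h : ((1:ℚ) - 5 ^ k) * 5 ^ j = 2 ^ e * z) : (2:ℤ) ^ (e - 2) ∣ k := by
  obtain ⟨K, j', z', hint, habs⟩ := one_sub_five_zpow_int h
  have h1 : (2:ℤ) ^ e ∣ (5 ^ K - 1) * 5 ^ j' := ⟨-z', by linarith [hint]⟩
  have h2 : (2:ℤ) ^ e ∣ 5 ^ K - 1 :=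
    (coprime_two_pow_five_pow e j').dvd_of_dvd_mul_right h1
  have h3 := (five_pow_sub_one_dvd_iff he K).mp h2
  have : (2:ℤ) ^ (e - 2) ∣ (k.natAbs : ℤ) := habs ▸ h3
  rcases Int.natAbs_eq k with hh | hh
  · rw [hh]; exact this
  · rw [hh]; exact dvd_neg.mpr this

/-- (C') -/
lemma no_one_add_five_zpow {e : ℕ} (he : 2 ≤ e) {k : ℤ} {j : ℕ} {z : ℤ}
    (h : ((1:ℚ) + 5 ^ k) * 5 ^ j = 2 ^ e * z) : False := by
  have hred : ∃ (K : ℕ) (j' : ℕ) (z' : ℤ), ((1:ℤ) + 5 ^ K) * 5 ^ j' = 2 ^ e * z' := by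
    rcases le_or_gt 0 k with hk0 | hk0
    · lift k to ℕ using hk0 with K
      refine ⟨K, j, z, ?_⟩
      have hq : (((1 + 5 ^ K) * 5 ^ j : ℤ) : ℚ) = ((2 ^ e * z : ℤ) : ℚ) := by
        push_cast
        rw [← zpow_natCast (5:ℚ) K]
        linarith [h]
      exact_mod_cast hq
    · obtain ⟨K, rfl⟩ : ∃ K : ℕ, k = -(K : ℤ) := ⟨k.natAbs, by omega⟩
      refine ⟨K, j, z * 5 ^ K, ?_⟩
      have h5K : ((5:ℚ) ^ (-(K:ℤ))) * 5 ^ K = 1 := by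
        rw [zpow_neg, zpow_natCast]
        field_simp
      have hq2 : ((1:ℚ) + 5 ^ K) * 5 ^ j = 2 ^ e * (z * 5 ^ K) := by
        have hmul : (((1:ℚ) + 5 ^ (-(K:ℤ))) * 5 ^ j) * 5 ^ K = (2 ^ e * z) * 5 ^ K := by
          rw [h]
        have expand : ((1:ℚ) + 5 ^ (-(K:ℤ))) * 5 ^ K = 5 ^ K + 1 := by
          rw [add_mul, one_mul, h5K]
        have hlhs : (((1:ℚ) + 5 ^ (-(K:ℤ))) * 5 ^ j) * 5 ^ K = ((5:ℚ) ^ K + 1) * 5 ^ j := by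
          calc (((1:ℚ) + 5 ^ (-(K:ℤ))) * 5 ^ j) * 5 ^ K
              = (((1:ℚ) + 5 ^ (-(K:ℤ))) * 5 ^ K) * 5 ^ j := by ring
            _ = ((5:ℚ) ^ K + 1) * 5 ^ j := by rw [expand]
        have : ((5:ℚ) ^ K + 1) * 5 ^ j = 2 ^ e * z * 5 ^ K := by rw [← hlhs, hmul]
        linarith [this]
      have hq : (((1 + 5 ^ K) * 5 ^ j : ℤ) : ℚ) = ((2 ^ e * (z * 5 ^ K) : ℤ) : ℚ) := by
        push_cast
        push_cast at hq2
        linarith [hq2]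
      exact_mod_cast hq
  obtain ⟨K, j', z', hint⟩ := hred
  have h1 : (2:ℤ) ^ 2 ∣ (1 + 5 ^ K) * 5 ^ j' := by
    rw [hint]
    exact Dvd.dvd.mul_right (pow_dvd_pow 2 he) z'
  have h2 : (2:ℤ) ^ 2 ∣ 1 + 5 ^ K :=
    (coprime_two_pow_five_pow 2 j').dvd_of_dvd_mul_right h1
  exact not_four_dvd_five_pow_add_one K (by norm_num at h2 ⊢; exact h2)


lemma mem_normalCore_iff {G : Type*} [Group G] (H : Subgroup G) (a : G) :
    a ∈ H.normalCore ↔ ∀ b, b * a * b⁻¹ ∈ H := Iff.rfl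

lemma SS_le_SS {r s : ℕ} (h : r ≤ s) : SS s ≤ SS r := by
  rintro e ⟨ε, k, t, ht, he⟩
  exact ⟨ε, k, t, TT_mono h ht, he⟩

lemma CC_le_SS {N d : ℕ} : CC N d ≤ SS N := by
  rintro e ⟨k, t, ht, he⟩
  exact ⟨1, (d:ℤ) * k, t, ht, by simpa using he⟩

lemma conj_mem_CC {M N : ℕ} (hMN : M + 2 ≤ N) (h g : Equiv.Perm ℚ)
    (hh : h ∈ SS M) (hg : g ∈ CC N (2 ^ (N - M - 2))) :
    h * g * h⁻¹ ∈ CC N (2 ^ (N - M - 2)) := by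
  obtain ⟨ε, l, s, hs, hhf⟩ := hh
  obtain ⟨k, t, ht, hgf⟩ := hg
  set d : ℕ := 2 ^ (N - M - 2) with hddef
  set u : ℚ := (5:ℚ) ^ ((d:ℤ) * k) with hudef
  set v : ℚ := (ε:ℚ) * 5 ^ l with hvdef
  have hv : v ≠ 0 := by
    have : (5:ℚ) ^ l ≠ 0 := five_zpow_ne _
    rcases Int.units_eq_one_or ε with rfl | rfl <;> simp [hvdef, this]
  have hinv := hhf.inv hv
  have haff := (hhf.mul hgf).mul hinv
  refine ⟨k, v * t + (s - u * s), ?_, ?_⟩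
  · refine (TT N).add_mem (TT_mul_unit ht ε l) ?_
    obtain ⟨zs, js, hzs⟩ := hs
    have hdvd : (2:ℤ) ^ (N - M - 2) ∣ (d:ℤ) * k := by
      refine Dvd.dvd.mul_right ?_ k
      rw [hddef]
      push_cast
      rfl
    have hNM2 : 2 ≤ N - M := by omega
    have hNM2' : N - M - 2 = (N - M) - 2 := rfl
    obtain ⟨w, J, hwJ⟩ := one_sub_five_zpow_mem hNM2 (k := (d:ℤ) * k) hdvd
    refine ⟨zs * w, js + J, ?_⟩
    have h2N : (2:ℚ) ^ N = 2 ^ M * 2 ^ (N - M) := by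
      rw [← pow_add]
      congr 1
      omega
    calc (s - u * s) * 5 ^ (js + J)
        = (s * 5 ^ js) * (((1:ℚ) - u) * 5 ^ J) := by rw [pow_add]; ring
      _ = (2 ^ M * zs) * (2 ^ (N - M) * w) := by rw [hzs, hudef, hwJ]
      _ = 2 ^ N * ((zs * w : ℤ) : ℚ) := by rw [h2N]; push_cast; ring
  · refine haff.congr ?_ ?_
    · field_simp
      try ring
    · field_simp
      try ring

lemma part1 (m n : ℕ) (hmn : m + 2 ≤ n) :
    ((Subgroup.closure {aQ ^ 2 ^ n, bQ, cQ}).subgroupOf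
        (Subgroup.closure {aQ ^ 2 ^ m, bQ, cQ})).normalCore
      = (Subgroup.closure {aQ ^ 2 ^ n, cQ ^ 2 ^ (n - m - 2)}).subgroupOf
          (Subgroup.closure {aQ ^ 2 ^ m, bQ, cQ}) := by
  have hd : 1 ≤ 2 ^ (n - m - 2) := Nat.one_le_two_pow
  have hnm2 : 2 ≤ n - m := by omega
  ext g
  rw [mem_normalCore_iff, Subgroup.mem_subgroupOf, closure_core_eq n _ hd]
  constructor
  · intro hgcore
    have hg_self : (g : Equiv.Perm ℚ) ∈ SS n := by
      have h1 := hgcore 1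
      rw [Subgroup.mem_subgroupOf] at h1
      simp only [one_mul, inv_one, mul_one] at h1
      rwa [closure_eq n] at h1
    obtain ⟨ε, k, t, ht, he⟩ := hg_self
    have hamem : aQ ^ 2 ^ m ∈ Subgroup.closure {aQ ^ 2 ^ m, bQ, cQ} :=
      Subgroup.subset_closure (by simp)
    have h2 := hgcore ⟨aQ ^ 2 ^ m, hamem⟩
    rw [Subgroup.mem_subgroupOf] at h2
    simp only [Subgroup.coe_mul, Subgroup.coe_inv] at h2
    rw [closure_eq n] at h2
    obtain ⟨ε₂, k₂, t₂, ht₂, he₂⟩ := h2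
    have hainv : isAff 1 (-((2:ℚ) ^ m)) ((aQ ^ 2 ^ m)⁻¹) := by
      refine ((haff_apow (2 ^ m)).inv one_ne_zero).congr (by norm_num) ?_
      push_cast
      norm_num
    have haffc := ((haff_apow (2 ^ m)).mul he).mul hainv
    have hteq := he₂.unique_t haffc
    have hT : (2:ℚ) ^ m * (1 - (ε:ℚ) * 5 ^ k) ∈ TT n := by
      have hsub := (TT n).sub_mem ht₂ ht
      have : t₂ - t = (2:ℚ) ^ m * (1 - (ε:ℚ) * 5 ^ k) := by
        rw [hteq]
        push_cast
        ring
      rwa [this] at hsub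
    obtain ⟨z, j, hzj⟩ := hT
    have h2m : (2:ℚ) ^ m ≠ 0 := by positivity
    have hzj' : ((1:ℚ) - (ε:ℚ) * 5 ^ k) * 5 ^ j = 2 ^ (n - m) * z := by
      apply mul_left_cancel₀ h2m
      have h2n : (2:ℚ) ^ n = 2 ^ m * 2 ^ (n - m) := by
        rw [← pow_add]
        congr 1
        omega
      calc (2:ℚ) ^ m * (((1:ℚ) - (ε:ℚ) * 5 ^ k) * 5 ^ j)
          = ((2:ℚ) ^ m * (1 - (ε:ℚ) * 5 ^ k)) * 5 ^ j := by ring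
        _ = 2 ^ n * z := hzj
        _ = 2 ^ m * (2 ^ (n - m) * z) := by rw [h2n]; ring
    rcases Int.units_eq_one_or ε with rfl | rfl
    · have hzz : ((1:ℚ) - 5 ^ k) * 5 ^ j = 2 ^ (n - m) * z := by
        push_cast at hzj'
        linarith [hzj']
      have hdvd := dvd_of_one_sub_five_zpow hnm2 hzz
      obtain ⟨k₃, rfl⟩ := hdvd
      refine ⟨k₃, t, ht, he.congr ?_ rfl⟩
      push_cast
      norm_num
    · exfalso
      have hzz : ((1:ℚ) + 5 ^ k) * 5 ^ j = 2 ^ (n - m) * z := by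
        push_cast at hzj'
        linarith [hzj']
      exact no_one_add_five_zpow hnm2 hzz
  · intro hgK b
    rw [Subgroup.mem_subgroupOf]
    simp only [Subgroup.coe_mul, Subgroup.coe_inv]
    rw [closure_eq n]
    have hb : (b : Equiv.Perm ℚ) ∈ SS m := le_of_eq (closure_eq m) b.2
    exact CC_le_SS (conj_mem_CC hmn _ _ hb hgK)


/-! ### Units of `ZMod (2^E)` -/

def u5 (E : ℕ) : (ZMod (2 ^ E))ˣ :=
  ZMod.unitOfCoprime 5 (Nat.Coprime.pow_right E (by decide))

lemma u5_val (E : ℕ) : (u5 E : ZMod (2 ^ E)) = 5 := by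
  rw [u5, ZMod.coe_unitOfCoprime]
  push_cast
  rfl

lemma intCast_two_pow_eq_zero (E : ℕ) : (((2:ℤ) ^ E : ℤ) : ZMod (2 ^ E)) = 0 := by
  rw [ZMod.intCast_zmod_eq_zero_iff_dvd]
  push_cast
  rfl

lemma u5_pow_eq_one_aux {E s : ℕ} (h : E ≤ s + 2) : u5 E ^ (2 ^ s) = 1 := by
  obtain ⟨o, ho, h5⟩ := five_pow_two_pow s
  ext
  push_cast
  rw [u5_val]
  have : ((5:ZMod (2 ^ E))) ^ (2 ^ s) = (((5 ^ 2 ^ s : ℤ) : ZMod (2 ^ E))) := by push_cast; ring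
  rw [this, h5]
  push_cast
  have h2 : ((2:ZMod (2 ^ E))) ^ E = 0 := by
    have := intCast_two_pow_eq_zero E
    push_cast at this
    exact this
  have hdvd : ((2:ZMod (2 ^ E))) ^ (s + 2) = 2 ^ E * 2 ^ (s + 2 - E) := by
    rw [← pow_add]
    congr 1
    omega
  rw [hdvd, h2]
  ring

lemma u5_pow_ne_one {E : ℕ} (hE : 3 ≤ E) : u5 E ^ (2 ^ (E - 3)) ≠ 1 := by
  intro h
  obtain ⟨o, ho, h5⟩ := five_pow_two_pow (E - 3)
  have hval : ((5:ZMod (2 ^ E))) ^ (2 ^ (E - 3)) = 1 := by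
    have := congrArg (Units.val) h
    rw [Units.val_pow_eq_pow_val, u5_val, Units.val_one] at this
    exact this
  have hcast : (((5 ^ 2 ^ (E - 3) - 1 : ℤ)) : ZMod (2 ^ E)) = 0 := by
    push_cast
    rw [hval]
    ring
  rw [ZMod.intCast_zmod_eq_zero_iff_dvd] at hcast
  have h2E : ((2 ^ E : ℕ) : ℤ) = 2 ^ E := by push_cast; rfl
  rw [h2E, h5] at hcast
  have hE3 : E - 3 + 2 = E - 1 := by omega
  have : (2:ℤ) ^ E ∣ 2 ^ (E - 1) * o := by
    rw [← hE3]
    convert hcast using 1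
    ring
  rw [two_pow_dvd_mul_odd ho] at this
  omega

lemma u5_orderOf {E : ℕ} (hE : 2 ≤ E) : orderOf (u5 E) = 2 ^ (E - 2) := by
  have hdvd : orderOf (u5 E) ∣ 2 ^ (E - 2) :=
    orderOf_dvd_of_pow_eq_one (u5_pow_eq_one_aux (by omega))
  obtain ⟨i, hi, hieq⟩ := (Nat.dvd_prime_pow Nat.prime_two).mp hdvd
  rcases eq_or_lt_of_le hi with rfl | hilt
  · exact hieq
  · exfalso
    rcases Nat.lt_or_ge E 3 with hE3 | hE3
    · -- E = 2, then i < 0 impossible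
      interval_cases E
      · simp at hi hilt
    · refine u5_pow_ne_one hE3 ?_
      apply orderOf_dvd_iff_pow_eq_one.mp
      rw [hieq]
      exact pow_dvd_pow 2 (by omega)

lemma u5_zpow_eq_one_iff {E : ℕ} (hE : 2 ≤ E) (K : ℤ) :
    u5 E ^ K = 1 ↔ (2:ℤ) ^ (E - 2) ∣ K := by
  rw [← orderOf_dvd_iff_zpow_eq_one, u5_orderOf hE]
  push_cast
  rfl

lemma four_dvd_two_pow {E : ℕ} (hE : 2 ≤ E) : (4:ℕ) ∣ 2 ^ E := by
  have : (4:ℕ) = 2 ^ 2 := by norm_num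
  rw [this]
  exact pow_dvd_pow 2 hE

lemma u5_map4 {E : ℕ} (hE : 2 ≤ E) :
    Units.map (ZMod.castHom (four_dvd_two_pow hE) (ZMod 4)).toMonoidHom (u5 E) = 1 := by
  ext
  rw [Units.coe_map, Units.val_one]
  simp only [RingHom.toMonoidHom_eq_coe, MonoidHom.coe_coe]
  rw [u5_val]
  have h5 : ((5:ZMod (2 ^ E))) = ((5:ℕ) : ZMod (2 ^ E)) := by push_cast; rfl
  rw [h5, map_natCast]
  decide

lemma neg_one_map4 {E : ℕ} (hE : 2 ≤ E) :
    Units.map (ZMod.castHom (four_dvd_two_pow hE) (ZMod 4)).toMonoidHom (-1) = -1 := by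
  ext
  rw [Units.coe_map]
  simp only [RingHom.toMonoidHom_eq_coe, MonoidHom.coe_coe, Units.val_neg, Units.val_one]
  rw [map_neg, map_one]

lemma neg_u5_zpow_ne_one {E : ℕ} (hE : 2 ≤ E) (K : ℤ) : (-1) * u5 E ^ K ≠ 1 := by
  intro h
  have h4 := congrArg (Units.map (ZMod.castHom (four_dvd_two_pow hE) (ZMod 4)).toMonoidHom) h
  rw [map_mul, map_zpow, u5_map4 hE, neg_one_map4 hE, map_one, one_zpow, mul_one] at h4
  have := congrArg Units.val h4
  rw [Units.val_neg, Units.val_one] at this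
  revert this
  decide


lemma units_decomp {E : ℕ} (hE : 2 ≤ E) (x : (ZMod (2 ^ E))ˣ) :
    ∃ i K : ℕ, i < 2 ∧ x = (-1) ^ i * u5 E ^ K := by
  haveI : NeZero (2 ^ E) := ⟨pow_ne_zero _ two_ne_zero⟩
  set f : Fin 2 × Fin (2 ^ (E - 2)) → (ZMod (2 ^ E))ˣ :=
    fun p => (-1) ^ (p.1 : ℕ) * u5 E ^ (p.2 : ℕ) with hf
  have hπ := fun (y : (ZMod (2 ^ E))ˣ) =>
    Units.map (ZMod.castHom (four_dvd_two_pow hE) (ZMod 4)).toMonoidHom y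
  have hinj : Function.Injective f := by
    rintro ⟨i, a⟩ ⟨i', a'⟩ hpq
    simp only [hf] at hpq
    have hmap := congrArg (Units.map (ZMod.castHom (four_dvd_two_pow hE) (ZMod 4)).toMonoidHom) hpq
    rw [map_mul, map_mul, map_pow, map_pow, map_pow, map_pow, u5_map4 hE, neg_one_map4 hE,
      one_pow, one_pow, mul_one, mul_one] at hmap
    have hii : i = i' := by
      fin_cases i <;> fin_cases i' <;> simp_all
      · exfalso
        have := congrArg Units.val hmap
        revert this
        decide
      · exfalso
        have := congrArg Units.val hmap
        revert this
        decide
    subst hii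
    have hcancel : u5 E ^ (a : ℕ) = u5 E ^ (a' : ℕ) := mul_left_cancel hpq
    have haa : (a : ℕ) = (a' : ℕ) := by
      refine pow_injOn_Iio_orderOf ?_ ?_ hcancel <;>
        · rw [Set.mem_Iio, u5_orderOf hE]
          exact Fin.isLt _
    exact Prod.ext rfl (Fin.ext haa)
  have hcard : Fintype.card (Fin 2 × Fin (2 ^ (E - 2))) = Fintype.card (ZMod (2 ^ E))ˣ := by
    rw [ZMod.card_units_eq_totient, Nat.totient_prime_pow Nat.prime_two (by omega : 0 < E)]
    simp only [Fintype.card_prod, Fintype.card_fin]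
    rw [show E - 1 = (E - 2) + 1 by omega, pow_succ]
    ring
  have hbij : Function.Bijective f :=
    (Fintype.bijective_iff_injective_and_card f).mpr ⟨hinj, hcard⟩
  obtain ⟨⟨i, a⟩, hia⟩ := hbij.surjective x
  exact ⟨i, a, i.isLt, hia.symm⟩

lemma unit_five_inj {ε ε' : ℤˣ} {k k' : ℤ} (h : (ε:ℚ) * 5 ^ k = (ε':ℚ) * 5 ^ k') :
    ε = ε' ∧ k = k' := by
  have h5k : (0:ℚ) < 5 ^ k := by positivity
  have h5k' : (0:ℚ) < 5 ^ k' := by positivity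
  rcases Int.units_eq_one_or ε with rfl | rfl <;> rcases Int.units_eq_one_or ε' with rfl | rfl
  · refine ⟨rfl, ?_⟩
    push_cast at h
    simpa using h
  · exfalso
    push_cast at h
    nlinarith [h5k, h5k']
  · exfalso
    push_cast at h
    nlinarith [h5k, h5k']
  · refine ⟨rfl, ?_⟩
    push_cast at h
    have h' : (5:ℚ) ^ k = 5 ^ k' := by linarith
    exact zpow_right_injective₀ (by norm_num) (by norm_num) h'

open scoped Classical in
noncomputable def toU (N E : ℕ) (g : Equiv.Perm ℚ) : (ZMod (2 ^ E))ˣ :=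
  if h : ∃ p : ℤˣ × ℤ, ∃ t ∈ TT N, isAff ((p.1 : ℚ) * 5 ^ p.2) t g then
    (if h.choose.1 = 1 then 1 else -1) * u5 E ^ h.choose.2
  else 1

lemma toU_spec (N E : ℕ) {g : Equiv.Perm ℚ} (ε : ℤˣ) (k : ℤ) (t : ℚ) (ht : t ∈ TT N)
    (he : isAff ((ε : ℚ) * 5 ^ k) t g) :
    toU N E g = (if ε = 1 then 1 else -1) * u5 E ^ k := by
  have hex : ∃ p : ℤˣ × ℤ, ∃ t ∈ TT N, isAff ((p.1 : ℚ) * 5 ^ p.2) t g := ⟨(ε, k), t, ht, he⟩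
  rw [toU, dif_pos hex]
  obtain ⟨t', ht', he'⟩ := hex.choose_spec
  obtain ⟨h1, h2⟩ := unit_five_inj (he'.unique_u he)
  rw [h1, h2]

lemma toU_mul (N E : ℕ) {g g' : Equiv.Perm ℚ} (hg : g ∈ SS N) (hg' : g' ∈ SS N) :
    toU N E (g * g') = toU N E g * toU N E g' := by
  obtain ⟨ε, k, t, ht, he⟩ := hg
  obtain ⟨ε', k', t', ht', he'⟩ := hg'
  have hkey : ((ε:ℚ) * 5 ^ k) * ((ε':ℚ) * 5 ^ k') = ((ε * ε' : ℤˣ) : ℚ) * 5 ^ (k + k') := by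
    push_cast
    rw [zpow_add₀ (by norm_num : (5:ℚ) ≠ 0)]
    ring
  have hprod : isAff (((ε * ε' : ℤˣ) : ℚ) * 5 ^ (k + k')) ((ε:ℚ) * 5 ^ k * t' + t) (g * g') :=
    (he.mul he').congr hkey rfl
  have hmem : (ε:ℚ) * 5 ^ k * t' + t ∈ TT N := (TT N).add_mem (TT_mul_unit ht' ε k) ht
  rw [toU_spec N E ε k t ht he, toU_spec N E ε' k' t' ht' he',
    toU_spec N E (ε * ε') (k + k') _ hmem hprod]
  rcases Int.units_eq_one_or ε with rfl | rfl <;> rcases Int.units_eq_one_or ε' with rfl | rfl <;>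
    norm_num [zpow_add (u5 E) k k']


lemma negone_ne_one : (-1 : ℤˣ) ≠ 1 := by decide

lemma part2 (m n : ℕ) (hmn : m + 2 ≤ n) :
    ∃ _ : ((Subgroup.closure {aQ ^ 2 ^ n, cQ ^ 2 ^ (n - m - 2)}).subgroupOf
        (Subgroup.closure {aQ ^ 2 ^ n, bQ, cQ})).Normal,
      Nonempty
        (((Subgroup.closure {aQ ^ 2 ^ n, bQ, cQ} : Subgroup (Equiv.Perm ℚ)) ⧸
            (Subgroup.closure {aQ ^ 2 ^ n, cQ ^ 2 ^ (n - m - 2)}).subgroupOf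
              (Subgroup.closure {aQ ^ 2 ^ n, bQ, cQ})) ≃*
          (ZMod (2 ^ (n - m)))ˣ) := by
  have hE : 2 ≤ n - m := by omega
  have hd : 1 ≤ 2 ^ (n - m - 2) := Nat.one_le_two_pow
  set E := n - m with hEdef
  set Gn := Subgroup.closure {aQ ^ 2 ^ n, bQ, cQ} with hGnd
  have hmemSS : ∀ g : Gn, (g : Equiv.Perm ℚ) ∈ SS n := fun g => le_of_eq (closure_eq n) g.2
  set φ : Gn →* (ZMod (2 ^ E))ˣ := MonoidHom.mk' (fun g => toU n E (g : Equiv.Perm ℚ))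
    (fun g g' => toU_mul n E (hmemSS g) (hmemSS g')) with hφ
  have hφapp : ∀ g : Gn, φ g = toU n E (g : Equiv.Perm ℚ) := fun g => rfl
  have hker : ∀ g : Gn, φ g = 1 ↔ (g : Equiv.Perm ℚ) ∈ CC n (2 ^ (n - m - 2)) := by
    intro g
    obtain ⟨ε, k, t, ht, he⟩ := hmemSS g
    have hval : φ g = (if ε = 1 then 1 else -1) * u5 E ^ k := by
      rw [hφapp]
      exact toU_spec n E ε k t ht he
    rcases Int.units_eq_one_or ε with rfl | rfl
    · rw [if_pos rfl, one_mul] at hval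
      rw [hval, u5_zpow_eq_one_iff hE k]
      constructor
      · intro hdvd
        obtain ⟨k₂, rfl⟩ := hdvd
        refine ⟨k₂, t, ht, he.congr ?_ rfl⟩
        push_cast
        norm_num
        left; omega
      · rintro ⟨k₂, t₂, ht₂, he₂⟩
        have hu := he.unique_u he₂
        have hu' : (5:ℚ) ^ k = 5 ^ (((2 ^ (n - m - 2) : ℕ) : ℤ) * k₂) := by
          push_cast at hu ⊢
          linarith [hu]
        have hk := zpow_right_injective₀ (by norm_num : (0:ℚ) < 5) (by norm_num) hu'
        rw [hk]
        refine Dvd.dvd.mul_right ?_ k₂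
        push_cast
        rfl
    · rw [if_neg negone_ne_one] at hval
      rw [hval]
      constructor
      · intro h1
        exact absurd h1 (neg_u5_zpow_ne_one hE k)
      · rintro ⟨k₂, t₂, ht₂, he₂⟩
        exfalso
        have hu := he.unique_u he₂
        have h5k : (0:ℚ) < 5 ^ k := by positivity
        have h5k2 : (0:ℚ) < 5 ^ (((2 ^ (n - m - 2) : ℕ) : ℤ) * k₂) := by positivity
        have hneg : ((-1 : ℤˣ) : ℚ) = -1 := by push_cast; ring
        rw [hneg] at hu
        nlinarith [h5k, h5k2]
  have hsurj : Function.Surjective φ := by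
    intro x
    obtain ⟨i, K, hi, hx⟩ := units_decomp hE x
    interval_cases i
    · refine ⟨⟨cQ ^ K, Subgroup.pow_mem _ (Subgroup.subset_closure (by simp)) K⟩, ?_⟩
      have haffK : isAff (((1:ℤˣ):ℚ) * 5 ^ (K:ℤ)) 0 (cQ ^ K) :=
        (haff_cpow K).congr (by push_cast; ring) rfl
      rw [hφapp, toU_spec n E 1 (K:ℤ) 0 (TT n).zero_mem haffK, hx]
      rw [if_pos rfl]
      simp [zpow_natCast]
    · refine ⟨⟨bQ * cQ ^ K, Subgroup.mul_mem _ (Subgroup.subset_closure (by simp))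
        (Subgroup.pow_mem _ (Subgroup.subset_closure (by simp)) K)⟩, ?_⟩
      have haffK : isAff (((-1:ℤˣ):ℚ) * 5 ^ (K:ℤ)) 0 (bQ * cQ ^ K) :=
        (haff_b.mul (haff_cpow K)).congr (by push_cast; ring) (by norm_num)
      rw [hφapp, toU_spec n E (-1) (K:ℤ) 0 (TT n).zero_mem haffK, hx]
      rw [if_neg negone_ne_one]
      simp [zpow_natCast]
  have hkereq : (Subgroup.closure {aQ ^ 2 ^ n, cQ ^ 2 ^ (n - m - 2)}).subgroupOf Gn = φ.ker := by
    ext g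
    rw [Subgroup.mem_subgroupOf, MonoidHom.mem_ker, closure_core_eq n _ hd]
    exact (hker g).symm
  have hnormal : ((Subgroup.closure {aQ ^ 2 ^ n, cQ ^ 2 ^ (n - m - 2)}).subgroupOf Gn).Normal := by
    rw [hkereq]
    exact φ.normal_ker
  refine ⟨hnormal, ⟨?_⟩⟩
  haveI := hnormal
  exact (QuotientGroup.quotientMulEquivOfEq hkereq).trans
    (QuotientGroup.quotientKerEquivOfSurjective φ hsurj)

end Stmt15

/-- Let `G_m = ⟨a^{2^m}, b, c⟩` inside the group of bijections of `ℚ`, where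
`a : x ↦ x + 1`, `b : x ↦ -x`, `c : x ↦ 5x`.  For `n ≥ m + 2`, the normal core of `G_n`
in `G_m` equals `⟨a^{2^n}, c^{2^{n-m-2}}⟩`, and the quotient of `G_n` by this core is
isomorphic to the unit group `(ℤ/2^{n-m}ℤ)ˣ`. -/
theorem stmt15 (m n : ℕ) (hmn : m + 2 ≤ n) :
    ((Subgroup.closure {aQ ^ 2 ^ n, bQ, cQ}).subgroupOf
        (Subgroup.closure {aQ ^ 2 ^ m, bQ, cQ})).normalCore
      = (Subgroup.closure {aQ ^ 2 ^ n, cQ ^ 2 ^ (n - m - 2)}).subgroupOf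
          (Subgroup.closure {aQ ^ 2 ^ m, bQ, cQ}) ∧
    ∃ _ : ((Subgroup.closure {aQ ^ 2 ^ n, cQ ^ 2 ^ (n - m - 2)}).subgroupOf
        (Subgroup.closure {aQ ^ 2 ^ n, bQ, cQ})).Normal,
      Nonempty
        (((Subgroup.closure {aQ ^ 2 ^ n, bQ, cQ} : Subgroup (Equiv.Perm ℚ)) ⧸
            (Subgroup.closure {aQ ^ 2 ^ n, cQ ^ 2 ^ (n - m - 2)}).subgroupOf
              (Subgroup.closure {aQ ^ 2 ^ n, bQ, cQ})) ≃*
          (ZMod (2 ^ (n - m)))ˣ) := by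
  exact ⟨Stmt15.part1 m n hmn, Stmt15.part2 m n hmn⟩
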